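/- Let α > −1 be real and j ≥ 1 an integer. There exist real polynomials P̃ and Q̃ (depending on j and α) such that P̃ has degree at most 2j−1 and only odd-degree terms, Q̃ has degree at most 2j−2 and only even-degree terms, and for all z > 0: z^{2j} · J_α^{(2j)}(z) = P̃(z) · J_{α+1}(z) + ( (−1)^j · z^{2j} + Q̃(z) ) · J_α(z), where J_α^{(m)} denotes the m-th derivative of J_α on (0,∞). -/

import Mathlib

/-- The Bessel function of the first kind, for `x > 0`,
`J_α(x) = Σ_{k=0}^∞ (-1)^k (x/2)^{2k+α} / (k! Γ(k+α+1))`. -/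
noncomputable def besselJ (α x : ℝ) : ℝ :=
  ∑' k : ℕ, (-1 : ℝ) ^ k * (x / 2) ^ (2 * (k : ℝ) + α) /
    ((Nat.factorial k : ℝ) * Real.Gamma ((k : ℝ) + α + 1))

open Filter Polynomial

namespace BesselAux

noncomputable def bterm (ν : ℝ) (k : ℕ) (x : ℝ) : ℝ :=
  (-1 : ℝ) ^ k * (x / 2) ^ (2 * (k : ℝ) + ν) /
    ((Nat.factorial k : ℝ) * Real.Gamma ((k : ℝ) + ν + 1))

noncomputable def bderiv (ν : ℝ) (k : ℕ) (x : ℝ) : ℝ :=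
  (-1 : ℝ) ^ k * ((2 * (k : ℝ) + ν) * (x / 2) ^ (2 * (k : ℝ) + ν - 1) / 2) /
    ((Nat.factorial k : ℝ) * Real.Gamma ((k : ℝ) + ν + 1))

lemma besselJ_eq (ν x : ℝ) : besselJ ν x = ∑' k, bterm ν k x := rfl

lemma gamma_pos {ν : ℝ} (hν : -1 < ν) (k : ℕ) : 0 < Real.Gamma ((k : ℝ) + ν + 1) := by
  apply Real.Gamma_pos_of_pos
  have : (0 : ℝ) ≤ k := k.cast_nonneg
  linarith


lemma div_le_half_div {x y b d : ℝ} (hb : 0 < b) (hd : 0 < d)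
    (h : x * (2 * d) ≤ y * b) : x / b ≤ 1 / 2 * (y / d) := by
  have e : 1 / 2 * (y / d) * b = y * b / (2 * d) := by
    ring
  rw [div_le_iff₀ hb, e, le_div_iff₀ (by linarith)]
  exact h

lemma summable_core {ν : ℝ} (hν : -1 < ν) {r : ℝ} (hr : 0 ≤ r) :
    Summable (fun k : ℕ => (2 * (k : ℝ) + 1) * r ^ k /
      ((Nat.factorial k : ℝ) * Real.Gamma ((k : ℝ) + ν + 1))) := by
  apply summable_of_ratio_norm_eventually_le (r := 1/2) (by norm_num)
  filter_upwards [eventually_ge_atTop (⌈max (6 * r) (-ν)⌉₊)] with k hk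
  have hk' : max (6 * r) (-ν) ≤ (k : ℝ) := (Nat.le_ceil _).trans (Nat.cast_le.mpr hk)
  have hk6 : 6 * r ≤ (k : ℝ) := le_trans (le_max_left _ _) hk'
  have hkν : -ν ≤ (k : ℝ) := le_trans (le_max_right _ _) hk'
  have hG := gamma_pos hν k
  have hkc : (0 : ℝ) ≤ (k : ℝ) := k.cast_nonneg
  have hG2 : Real.Gamma ((k : ℝ) + 1 + ν + 1) = ((k : ℝ) + ν + 1) * Real.Gamma ((k : ℝ) + ν + 1) := by
    have h1 : ((k : ℝ) + 1 + ν + 1) = ((k : ℝ) + ν + 1) + 1 := by ring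
    rw [h1, Real.Gamma_add_one (by nlinarith : ((k:ℝ) + ν + 1) ≠ 0)]
  have hF : (0 : ℝ) < (Nat.factorial k : ℝ) := by exact_mod_cast k.factorial_pos
  have hrk : (0 : ℝ) ≤ r ^ k := pow_nonneg hr k
  have hpos1 : 0 ≤ (2 * (k : ℝ) + 1) * r ^ k / ((Nat.factorial k : ℝ) * Real.Gamma ((k : ℝ) + ν + 1)) := by
    positivity
  have hpos2 : 0 ≤ (2 * (((k : ℕ) + 1 : ℕ) : ℝ) + 1) * r ^ (k + 1) /
      ((Nat.factorial (k + 1) : ℝ) * Real.Gamma ((((k : ℕ) + 1 : ℕ) : ℝ) + ν + 1)) := by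
    have := gamma_pos hν (k + 1)
    have hF1 : (0 : ℝ) < (Nat.factorial (k+1) : ℝ) := by exact_mod_cast (k+1).factorial_pos
    positivity
  rw [Real.norm_eq_abs, Real.norm_eq_abs, abs_of_nonneg hpos2, abs_of_nonneg hpos1]
  have h1 : (1:ℝ) ≤ (k:ℝ) + ν + 1 := by linarith
  have h2 : (2 * ((k:ℝ) + 1) + 1) * r * 2 ≤ (2*(k:ℝ)+1) * (((k:ℝ)+1) * ((k:ℝ)+ν+1)) := by
    nlinarith [mul_le_mul_of_nonneg_left hk6 hkc]
  apply div_le_half_div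
  · have hF1 : (0 : ℝ) < (Nat.factorial (k+1) : ℝ) := by exact_mod_cast (k+1).factorial_pos
    have := gamma_pos hν (k+1)
    push_cast at this
    push_cast
    positivity
  · positivity
  · push_cast [Nat.factorial_succ, hG2]
    calc (2 * ((k:ℝ) + 1) + 1) * r ^ (k + 1) * (2 * ((Nat.factorial k : ℝ) * Real.Gamma ((k:ℝ) + ν + 1)))
        = ((2 * ((k:ℝ) + 1) + 1) * r * 2) * (r ^ k * ((Nat.factorial k : ℝ) * Real.Gamma ((k:ℝ) + ν + 1))) := by
          rw [pow_succ]; ring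
      _ ≤ ((2*(k:ℝ)+1) * (((k:ℝ)+1) * ((k:ℝ)+ν+1))) * (r ^ k * ((Nat.factorial k : ℝ) * Real.Gamma ((k:ℝ) + ν + 1))) := by
          apply mul_le_mul_of_nonneg_right h2; positivity
      _ = (2*(k:ℝ)+1) * r ^ k * (((k:ℝ)+1) * (Nat.factorial k : ℝ) * (((k:ℝ)+ν+1) * Real.Gamma ((k:ℝ) + ν + 1))) := by ring

lemma summable_of_le_core {ν : ℝ} (hν : -1 < ν) {r : ℝ} (hr : 0 ≤ r) {C : ℝ}
    (f : ℕ → ℝ)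
    (hf : ∀ k, |f k| ≤ (2 * (k : ℝ) + 1) * C * r ^ k /
      ((Nat.factorial k : ℝ) * Real.Gamma ((k : ℝ) + ν + 1))) : Summable f := by
  apply Summable.of_norm_bounded ((summable_core hν hr).mul_left C)
  intro k
  rw [Real.norm_eq_abs]
  calc |f k| ≤ (2 * (k : ℝ) + 1) * C * r ^ k /
      ((Nat.factorial k : ℝ) * Real.Gamma ((k : ℝ) + ν + 1)) := hf k
    _ = C * ((2 * (k : ℝ) + 1) * r ^ k /
      ((Nat.factorial k : ℝ) * Real.Gamma ((k : ℝ) + ν + 1))) := by ring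

lemma rpow_split {x : ℝ} (hx : 0 < x) (ν : ℝ) (k : ℕ) :
    x ^ (2 * (k : ℝ) + ν) = (x ^ 2) ^ k * x ^ ν := by
  rw [Real.rpow_add hx]
  congr 1
  have : (2 * (k : ℝ)) = ((2 * k : ℕ) : ℝ) := by push_cast; ring
  rw [this, Real.rpow_natCast, pow_mul]

lemma abs_bterm {ν : ℝ} (hν : -1 < ν) (k : ℕ) {x : ℝ} (hx : 0 < x) :
    |bterm ν k x| = ((x / 2) ^ 2) ^ k * (x / 2) ^ ν /
      ((Nat.factorial k : ℝ) * Real.Gamma ((k : ℝ) + ν + 1)) := by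
  have h2 : (0:ℝ) < x / 2 := by linarith
  rw [bterm, abs_div, abs_mul, abs_pow, abs_neg, abs_one, one_pow, one_mul,
    abs_of_nonneg (Real.rpow_nonneg h2.le _),
    abs_of_nonneg (mul_nonneg (Nat.cast_nonneg _) (gamma_pos hν k).le),
    rpow_split h2]

lemma summable_bterm {ν : ℝ} (hν : -1 < ν) {x : ℝ} (hx : 0 < x) :
    Summable (fun k => bterm ν k x) := by
  have h2 : (0:ℝ) < x / 2 := by linarith
  apply summable_of_le_core hν (r := (x/2)^2) (by positivity) (C := (x/2) ^ ν)
  intro k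
  rw [abs_bterm hν k hx]
  have hG := gamma_pos hν k
  have hF : (0 : ℝ) < (Nat.factorial k : ℝ) := by exact_mod_cast k.factorial_pos
  have hb : ((x/2)^2)^k * (x/2)^ν ≤ (2 * (k:ℝ) + 1) * ((x/2)^ν) * ((x/2)^2)^k := by
    have h1 : (1:ℝ) ≤ 2 * (k:ℝ) + 1 := by
      have : (0:ℝ) ≤ (k:ℝ) := k.cast_nonneg; linarith
    have hnn : (0:ℝ) ≤ ((x/2)^2)^k * (x/2)^ν := by positivity
    nlinarith [Real.rpow_nonneg h2.le ν, pow_nonneg (sq_nonneg (x/2)) k]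
  exact div_le_div_of_nonneg_right hb (by positivity)

lemma hasDerivAt_term (ν : ℝ) (k : ℕ) {x : ℝ} (hx : 0 < x) :
    HasDerivAt (fun y => bterm ν k y) (bderiv ν k x) x := by
  have h2 : (x / 2) ≠ 0 := by positivity
  have h1 : HasDerivAt (fun y : ℝ => y / 2) (1/2) x := (hasDerivAt_id x).div_const 2
  have hp : HasDerivAt (fun y : ℝ => y ^ (2 * (k : ℝ) + ν))
      ((2 * (k : ℝ) + ν) * (x/2) ^ (2 * (k : ℝ) + ν - 1)) (x/2) :=
    Real.hasDerivAt_rpow_const (Or.inl h2)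
  have := ((hp.comp x h1).const_mul ((-1:ℝ)^k)).div_const
    ((Nat.factorial k : ℝ) * Real.Gamma ((k : ℝ) + ν + 1))
  refine this.congr_deriv ?_
  unfold bderiv
  ring

lemma hasDerivAt_besselJ {ν : ℝ} (hν : -1 < ν) {z : ℝ} (hz : 0 < z) :
    HasDerivAt (besselJ ν) (∑' k, bderiv ν k z) z := by
  set C : ℝ := max ((z/4) ^ (ν - 1)) (z ^ (ν - 1)) with hC
  have hCpos : 0 < C := lt_max_of_lt_right (Real.rpow_pos_of_pos hz _)
  set u : ℕ → ℝ := fun k => (2*(k:ℝ)+1) * ((|ν|+1) * C) * (z^2)^k /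
    ((Nat.factorial k : ℝ) * Real.Gamma ((k : ℝ) + ν + 1)) with hu_def
  have hu_nonneg : ∀ k, 0 ≤ u k := by
    intro k
    have hG := gamma_pos hν k
    have hF : (0 : ℝ) < (Nat.factorial k : ℝ) := by exact_mod_cast k.factorial_pos
    have : (0:ℝ) ≤ (k:ℝ) := k.cast_nonneg
    have : (0:ℝ) ≤ |ν| := abs_nonneg ν
    positivity
  have hu : Summable u := by
    apply summable_of_le_core hν (r := z^2) (by positivity) (C := (|ν|+1) * C)
    intro k
    rw [abs_of_nonneg (hu_nonneg k)]
  have hbound : ∀ k : ℕ, ∀ y ∈ Set.Ioo (z/2) (2*z), ‖bderiv ν k y‖ ≤ u k := by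
    intro k y hy
    obtain ⟨hy1, hy2⟩ := hy
    have hy0 : 0 < y := lt_trans (by linarith) hy1
    have hy20 : 0 < y / 2 := by linarith
    have hG := gamma_pos hν k
    have hF : (0 : ℝ) < (Nat.factorial k : ℝ) := by exact_mod_cast k.factorial_pos
    have habs : ‖bderiv ν k y‖ = |2*(k:ℝ)+ν| * (y/2) ^ (2*(k:ℝ)+ν-1) / 2 /
        ((Nat.factorial k : ℝ) * Real.Gamma ((k : ℝ) + ν + 1)) := by
      rw [Real.norm_eq_abs, bderiv, abs_div, abs_mul, abs_pow, abs_neg, abs_one, one_pow,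
        one_mul, abs_div, abs_mul, abs_of_nonneg (Real.rpow_nonneg hy20.le _),
        abs_of_nonneg (by norm_num : (0:ℝ) ≤ (2:ℝ)),
        abs_of_nonneg (mul_nonneg (Nat.cast_nonneg _) hG.le)]
    rw [habs, hu_def]
    apply div_le_div_of_nonneg_right ?_ (by positivity)
    have hsplit : (y/2) ^ (2*(k:ℝ)+ν-1) = ((y/2)^2)^k * (y/2) ^ (ν-1) := by
      have : 2*(k:ℝ)+ν-1 = 2*(k:ℝ)+(ν-1) := by ring
      rw [this, rpow_split hy20]
    have hpow : ((y/2)^2)^k ≤ (z^2)^k := by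
      apply pow_le_pow_left₀ (sq_nonneg _)
      nlinarith
    have hCb : (y/2) ^ (ν-1) ≤ C := by
      rcases le_or_gt 0 (ν-1) with h | h
      · exact le_trans (Real.rpow_le_rpow hy20.le (by linarith) h) (le_max_right _ _)
      · exact le_trans (Real.rpow_le_rpow_of_nonpos (by linarith : (0:ℝ) < z/4)
          (by linarith) h.le) (le_max_left _ _)
    have ha : |2*(k:ℝ)+ν| ≤ (2*(k:ℝ)+1) * (|ν|+1) := by
      have h1 : |2*(k:ℝ)+ν| ≤ |2*(k:ℝ)| + |ν| := abs_add_le _ _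
      have h2 : |2*(k:ℝ)| = 2*(k:ℝ) := abs_of_nonneg (by positivity)
      have : (0:ℝ) ≤ (k:ℝ) := k.cast_nonneg
      have : (0:ℝ) ≤ |ν| := abs_nonneg ν
      nlinarith
    have hb : (y/2) ^ (2*(k:ℝ)+ν-1) ≤ (z^2)^k * C := by
      rw [hsplit]
      exact mul_le_mul hpow hCb (Real.rpow_nonneg hy20.le _) (by positivity)
    have hbnn : (0:ℝ) ≤ (y/2) ^ (2*(k:ℝ)+ν-1) := Real.rpow_nonneg hy20.le _
    calc |2*(k:ℝ)+ν| * (y/2) ^ (2*(k:ℝ)+ν-1) / 2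
        ≤ |2*(k:ℝ)+ν| * (y/2) ^ (2*(k:ℝ)+ν-1) := by
          have := mul_nonneg (abs_nonneg (2*(k:ℝ)+ν)) hbnn
          linarith
      _ ≤ ((2*(k:ℝ)+1) * (|ν|+1)) * ((z^2)^k * C) :=
          mul_le_mul ha hb hbnn (by positivity)
      _ = (2*(k:ℝ)+1) * ((|ν|+1) * C) * (z^2)^k := by ring
  have hfun : besselJ ν = fun y => ∑' k, bterm ν k y := rfl
  rw [hfun]
  exact hasDerivAt_tsum_of_isPreconnected hu isOpen_Ioo isPreconnected_Ioo
    (fun k y hy => hasDerivAt_term ν k (lt_trans (by linarith) hy.1))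
    hbound (show z ∈ Set.Ioo (z/2) (2*z) by constructor <;> linarith)
    (summable_bterm hν hz) (show z ∈ Set.Ioo (z/2) (2*z) by constructor <;> linarith)

lemma summable_bderiv {ν : ℝ} (hν : -1 < ν) {z : ℝ} (hz : 0 < z) :
    Summable (fun k => bderiv ν k z) := by
  have hw : (0:ℝ) < z/2 := by linarith
  apply summable_of_le_core hν (r := (z/2)^2) (by positivity)
    (C := (|ν|+1) * (z/2) ^ (ν-1))
  intro k
  have hG := gamma_pos hν k
  have hF : (0 : ℝ) < (Nat.factorial k : ℝ) := by exact_mod_cast k.factorial_pos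
  have habs : |bderiv ν k z| = |2*(k:ℝ)+ν| * (z/2) ^ (2*(k:ℝ)+ν-1) / 2 /
      ((Nat.factorial k : ℝ) * Real.Gamma ((k : ℝ) + ν + 1)) := by
    rw [bderiv, abs_div, abs_mul, abs_pow, abs_neg, abs_one, one_pow,
      one_mul, abs_div, abs_mul, abs_of_nonneg (Real.rpow_nonneg hw.le _),
      abs_of_nonneg (by norm_num : (0:ℝ) ≤ (2:ℝ)),
      abs_of_nonneg (mul_nonneg (Nat.cast_nonneg _) hG.le)]
  rw [habs]
  apply div_le_div_of_nonneg_right ?_ (by positivity)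
  have hsplit : (z/2) ^ (2*(k:ℝ)+ν-1) = ((z/2)^2)^k * (z/2) ^ (ν-1) := by
    have : 2*(k:ℝ)+ν-1 = 2*(k:ℝ)+(ν-1) := by ring
    rw [this, rpow_split hw]
  have ha : |2*(k:ℝ)+ν| ≤ (2*(k:ℝ)+1) * (|ν|+1) := by
    have h1 : |2*(k:ℝ)+ν| ≤ |2*(k:ℝ)| + |ν| := abs_add_le _ _
    have h2 : |2*(k:ℝ)| = 2*(k:ℝ) := abs_of_nonneg (by positivity)
    have : (0:ℝ) ≤ (k:ℝ) := k.cast_nonneg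
    have : (0:ℝ) ≤ |ν| := abs_nonneg ν
    nlinarith
  have hbnn : (0:ℝ) ≤ (z/2) ^ (2*(k:ℝ)+ν-1) := Real.rpow_nonneg hw.le _
  calc |2*(k:ℝ)+ν| * (z/2) ^ (2*(k:ℝ)+ν-1) / 2
      ≤ |2*(k:ℝ)+ν| * (z/2) ^ (2*(k:ℝ)+ν-1) := by
        have := mul_nonneg (abs_nonneg (2*(k:ℝ)+ν)) hbnn
        linarith
    _ = ((z/2)^2)^k * (z/2)^(ν-1) * |2*(k:ℝ)+ν| := by rw [hsplit]; ring
    _ ≤ ((z/2)^2)^k * (z/2)^(ν-1) * ((2*(k:ℝ)+1) * (|ν|+1)) := by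
        apply mul_le_mul_of_nonneg_left ha
        positivity
    _ = (2*(k:ℝ)+1) * ((|ν|+1) * (z/2)^(ν-1)) * ((z/2)^2)^k := by ring

lemma tsum_bderiv_succ {α : ℝ} (hα : -1 < α) {z : ℝ} (hz : 0 < z) :
    ∑' k, bderiv (α + 1) k z = besselJ α z - (α + 1) / z * besselJ (α + 1) z := by
  have hα1 : -1 < α + 1 := by linarith
  have hw : (0:ℝ) < z/2 := by linarith
  have hs0 : Summable (fun k => bterm α k z) := summable_bterm hα hz
  have hs1 : Summable (fun k => (α+1)/z * bterm (α+1) k z) :=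
    (summable_bterm hα1 hz).mul_left _
  rw [besselJ_eq, besselJ_eq, ← tsum_mul_left, ← Summable.tsum_sub hs0 hs1]
  apply tsum_congr
  intro k
  have hG := gamma_pos hα k
  have hF : (0 : ℝ) < (Nat.factorial k : ℝ) := by exact_mod_cast k.factorial_pos
  have hke : ((k:ℝ) + α + 1) ≠ 0 := by
    have : (0:ℝ) ≤ (k:ℝ) := k.cast_nonneg
    nlinarith
  have hΓ : Real.Gamma ((k:ℝ) + (α+1) + 1) = ((k:ℝ)+α+1) * Real.Gamma ((k:ℝ)+α+1) := by
    rw [show (k:ℝ) + (α+1) + 1 = ((k:ℝ)+α+1) + 1 by ring, Real.Gamma_add_one hke]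
  have hexp1 : 2*(k:ℝ)+(α+1)-1 = 2*(k:ℝ)+α := by ring
  have hexp2 : (z/2) ^ (2*(k:ℝ)+(α+1)) = (z/2)^(2*(k:ℝ)+α) * (z/2) := by
    rw [show 2*(k:ℝ)+(α+1) = (2*(k:ℝ)+α)+1 by ring, Real.rpow_add_one (ne_of_gt hw)]
  rw [bderiv, bterm, bterm, hΓ, hexp1, hexp2]
  field_simp
  ring

lemma tsum_bderiv_self {α : ℝ} (hα : -1 < α) {z : ℝ} (hz : 0 < z) :
    ∑' k, bderiv α k z = α / z * besselJ α z - besselJ (α + 1) z := by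
  have hα1 : -1 < α + 1 := by linarith
  have hw : (0:ℝ) < z/2 := by linarith
  set h : ℕ → ℝ := fun k => (-1:ℝ)^k * ((k:ℝ) * (z/2) ^ (2*(k:ℝ)+α-1)) /
    ((Nat.factorial k : ℝ) * Real.Gamma ((k : ℝ) + α + 1)) with hh
  have hterm : ∀ k, bderiv α k z = α/z * bterm α k z + h k := by
    intro k
    have hG := gamma_pos hα k
    have hF : (0 : ℝ) < (Nat.factorial k : ℝ) := by exact_mod_cast k.factorial_pos
    have hexp : (z/2) ^ (2*(k:ℝ)+α) = (z/2)^(2*(k:ℝ)+α-1) * (z/2) := by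
      have := Real.rpow_add_one (ne_of_gt hw) (2*(k:ℝ)+α-1)
      rwa [show 2*(k:ℝ)+α-1+1 = 2*(k:ℝ)+α by ring] at this
    rw [bderiv, bterm, hh, hexp]
    set W := (z/2) ^ (2*(k:ℝ)+α-1) with hW
    field_simp
    ring
  have hsumh : Summable h := by
    apply summable_of_le_core hα (r := (z/2)^2) (by positivity) (C := (z/2) ^ (α-1))
    intro k
    have hG := gamma_pos hα k
    have hF : (0 : ℝ) < (Nat.factorial k : ℝ) := by exact_mod_cast k.factorial_pos
    have habs : |h k| = (k:ℝ) * (z/2) ^ (2*(k:ℝ)+α-1) /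
        ((Nat.factorial k : ℝ) * Real.Gamma ((k : ℝ) + α + 1)) := by
      rw [hh]
      rw [abs_div, abs_mul, abs_pow, abs_neg, abs_one, one_pow, one_mul, abs_mul,
        abs_of_nonneg (Real.rpow_nonneg hw.le _),
        abs_of_nonneg (k.cast_nonneg : (0:ℝ) ≤ (k:ℝ)),
        abs_of_nonneg (mul_nonneg (Nat.cast_nonneg _) hG.le)]
    rw [habs]
    apply div_le_div_of_nonneg_right ?_ (by positivity)
    have hsplit : (z/2) ^ (2*(k:ℝ)+α-1) = ((z/2)^2)^k * (z/2) ^ (α-1) := by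
      rw [show 2*(k:ℝ)+α-1 = 2*(k:ℝ)+(α-1) by ring, rpow_split hw]
    rw [hsplit]
    have : (0:ℝ) ≤ (k:ℝ) := k.cast_nonneg
    have h1 : (k:ℝ) ≤ 2*(k:ℝ)+1 := by linarith
    calc (k:ℝ) * (((z/2)^2)^k * (z/2)^(α-1))
        ≤ (2*(k:ℝ)+1) * (((z/2)^2)^k * (z/2)^(α-1)) := by
          apply mul_le_mul_of_nonneg_right h1; positivity
      _ = (2*(k:ℝ)+1) * (z/2)^(α-1) * ((z/2)^2)^k := by ring
  have hshift : ∀ k : ℕ, h (k+1) = -(bterm (α+1) k z) := by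
    intro k
    have hG := gamma_pos hα1 k
    have hF : (0 : ℝ) < (Nat.factorial k : ℝ) := by exact_mod_cast k.factorial_pos
    have hexp : 2*((k:ℕ)+1:ℕ) + α - 1 = 2*(k:ℝ)+(α+1) := by push_cast; ring
    have hΓarg : ((((k:ℕ)+1:ℕ)):ℝ) + α + 1 = (k:ℝ) + (α+1) + 1 := by push_cast; ring
    rw [hh]
    simp only [bterm]
    rw [show (2*((((k:ℕ)+1:ℕ)):ℝ) + α - 1) = 2*(k:ℝ)+(α+1) by push_cast; ring, hΓarg]
    push_cast [Nat.factorial_succ, pow_succ]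
    have hpow : (0:ℝ) ≤ (z/2) ^ (2*(k:ℝ)+(α+1)) := Real.rpow_nonneg hw.le _
    field_simp
  have hsum_main : Summable (fun k => α/z * bterm α k z) := (summable_bterm hα hz).mul_left _
  calc ∑' k, bderiv α k z = ∑' k, (α/z * bterm α k z + h k) := tsum_congr hterm
    _ = (∑' k, α/z * bterm α k z) + ∑' k, h k := Summable.tsum_add hsum_main hsumh
    _ = α/z * besselJ α z + ∑' k, h k := by rw [tsum_mul_left, besselJ_eq]
    _ = α/z * besselJ α z - besselJ (α+1) z := by
        rw [Summable.tsum_eq_zero_add hsumh]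
        have h0 : h 0 = 0 := by simp [hh]
        rw [h0, zero_add]
        have : ∑' k, h (k+1) = ∑' k, -(bterm (α+1) k z) := tsum_congr hshift
        rw [this, tsum_neg, besselJ_eq (α+1) z]
        ring

lemma hasDerivAt_J0 {α : ℝ} (hα : -1 < α) {z : ℝ} (hz : 0 < z) :
    HasDerivAt (besselJ α) (α / z * besselJ α z - besselJ (α + 1) z) z := by
  have := hasDerivAt_besselJ hα hz
  rwa [tsum_bderiv_self hα hz] at this

lemma hasDerivAt_J1 {α : ℝ} (hα : -1 < α) {z : ℝ} (hz : 0 < z) :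
    HasDerivAt (besselJ (α + 1)) (besselJ α z - (α + 1) / z * besselJ (α + 1) z) z := by
  have := hasDerivAt_besselJ (ν := α + 1) (by linarith) hz
  rwa [tsum_bderiv_succ hα hz] at this

lemma coeff_X_mul_deriv (p : Polynomial ℝ) (k : ℕ) :
    (X * derivative p).coeff k = (k : ℝ) * p.coeff k := by
  cases k with
  | zero => simp
  | succ n => rw [Polynomial.coeff_X_mul, Polynomial.coeff_derivative]; push_cast; ring

lemma coeff_X_mul' (p : Polynomial ℝ) (k : ℕ) :
    (X * p).coeff k = if k = 0 then 0 else p.coeff (k - 1) := by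
  cases k with
  | zero => simp
  | succ n => rw [Polynomial.coeff_X_mul]; simp

lemma main_induction {α : ℝ} (hα : -1 < α) (m : ℕ) :
    ∃ A B : Polynomial ℝ,
      (∀ k : ℕ, A.coeff k ≠ 0 → Odd k ∧ k ≤ m) ∧
      (∀ k : ℕ, B.coeff k ≠ 0 → Even k ∧ k ≤ m) ∧
      (Even m → B.coeff m = (-1 : ℝ) ^ (m / 2)) ∧
      (Odd m → A.coeff m = -(-1 : ℝ) ^ (m / 2)) ∧
      ∀ z : ℝ, 0 < z →
        z ^ m * iteratedDeriv m (besselJ α) z =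
          A.eval z * besselJ (α + 1) z + B.eval z * besselJ α z := by
  induction m with
  | zero =>
    refine ⟨0, 1, by simp, ?_, by simp, ?_, ?_⟩
    · intro k hk
      rw [Polynomial.coeff_one] at hk
      by_cases h : k = 0
      · subst h; exact ⟨Even.zero, le_refl 0⟩
      · simp [h] at hk
    · intro h; exact absurd h (by simp)
    · intro z hz
      simp [iteratedDeriv_zero]
  | succ m ih =>
    obtain ⟨A, B, hA, hB, hBtop, hAtop, hId⟩ := ih
    refine ⟨X * derivative A - C (α + 1 + m) * A - X * B,
            X * A + X * derivative B + C (α - m) * B, ?_, ?_, ?_, ?_, ?_⟩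
    · -- coeffs of new A
      intro k hk
      have hcoeff : (X * derivative A - C (α + 1 + m) * A - X * B).coeff k =
          (k : ℝ) * A.coeff k - (α + 1 + m) * A.coeff k - (X * B).coeff k := by
        rw [Polynomial.coeff_sub, Polynomial.coeff_sub, coeff_X_mul_deriv,
          Polynomial.coeff_C_mul]
      rw [hcoeff] at hk
      by_cases hAk : A.coeff k = 0
      · rw [hAk] at hk
        simp only [mul_zero, sub_zero, zero_sub, neg_ne_zero] at hk
        rw [coeff_X_mul'] at hk
        by_cases hk0 : k = 0
        · simp [hk0] at hk
        · rw [if_neg hk0] at hk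
          obtain ⟨he, hle⟩ := hB (k - 1) hk
          refine ⟨?_, by omega⟩
          obtain ⟨i, hi⟩ := he
          exact ⟨i, by omega⟩
      · obtain ⟨ho, hle⟩ := hA k hAk
        exact ⟨ho, by omega⟩
    · -- coeffs of new B
      intro k hk
      have hcoeff : (X * A + X * derivative B + C (α - m) * B).coeff k =
          (X * A).coeff k + (k : ℝ) * B.coeff k + (α - m) * B.coeff k := by
        rw [Polynomial.coeff_add, Polynomial.coeff_add, coeff_X_mul_deriv,
          Polynomial.coeff_C_mul]
      rw [hcoeff] at hk
      by_cases hBk : B.coeff k = 0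
      · rw [hBk] at hk
        simp only [mul_zero, add_zero] at hk
        rw [coeff_X_mul'] at hk
        by_cases hk0 : k = 0
        · simp [hk0] at hk
        · rw [if_neg hk0] at hk
          obtain ⟨ho, hle⟩ := hA (k - 1) hk
          obtain ⟨i, hi⟩ := ho
          refine ⟨⟨i + 1, by omega⟩, by omega⟩
      · obtain ⟨he, hle⟩ := hB k hBk
        exact ⟨he, by omega⟩
    · -- top coeff of new B at m+1, Even (m+1)
      intro hev
      have hm : Odd m := by
        rcases Nat.even_or_odd m with h | h
        · exfalso; exact (Nat.even_add_one.mp hev) h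
        · exact h
      have hBm1 : B.coeff (m + 1) = 0 := by
        by_contra h
        exact absurd (hB _ h).2 (by omega)
      have hcoeff : (X * A + X * derivative B + C (α - m) * B).coeff (m + 1) =
          (X * A).coeff (m + 1) + ((m + 1 : ℕ) : ℝ) * B.coeff (m + 1) +
            (α - m) * B.coeff (m + 1) := by
        rw [Polynomial.coeff_add, Polynomial.coeff_add, coeff_X_mul_deriv,
          Polynomial.coeff_C_mul]
      rw [hcoeff, hBm1, Polynomial.coeff_X_mul, hAtop hm]
      obtain ⟨i, hi⟩ := hm
      have h1 : m / 2 = i := by omega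
      have h2 : (m + 1) / 2 = i + 1 := by omega
      rw [h1, h2]
      ring
    · -- top coeff of new A at m+1, Odd (m+1)
      intro hod
      have hm : Even m := by
        rcases Nat.even_or_odd m with h | h
        · exact h
        · exfalso
          obtain ⟨i, hi⟩ := h
          obtain ⟨i', hi'⟩ := hod
          omega
      have hAm1 : A.coeff (m + 1) = 0 := by
        by_contra h
        exact absurd (hA _ h).2 (by omega)
      have hcoeff : (X * derivative A - C (α + 1 + m) * A - X * B).coeff (m + 1) =
          ((m + 1 : ℕ) : ℝ) * A.coeff (m + 1) - (α + 1 + m) * A.coeff (m + 1) -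
            (X * B).coeff (m + 1) := by
        rw [Polynomial.coeff_sub, Polynomial.coeff_sub, coeff_X_mul_deriv,
          Polynomial.coeff_C_mul]
      rw [hcoeff, hAm1, Polynomial.coeff_X_mul, hBtop hm]
      obtain ⟨i, hi⟩ := hm
      have h1 : m / 2 = i := by omega
      have h2 : (m + 1) / 2 = i := by omega
      rw [h1, h2]
      ring
    · -- the identity
      intro z hz
      have hz' : z ≠ 0 := ne_of_gt hz
      set h : ℝ → ℝ := fun x =>
        (A.eval x * besselJ (α + 1) x + B.eval x * besselJ α x) * x ^ (-(m : ℤ)) with hh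
      have heq : ∀ x ∈ Set.Ioi (0:ℝ), iteratedDeriv m (besselJ α) x = h x := by
        intro x hx
        have hx0 : (0:ℝ) < x := hx
        have hxm : x ^ m ≠ 0 := pow_ne_zero m (ne_of_gt hx0)
        have := hId x hx0
        rw [hh]
        simp only [zpow_neg, zpow_natCast]
        field_simp
        linarith [this]
      have hev : iteratedDeriv m (besselJ α) =ᶠ[nhds z] h :=
        Filter.eventuallyEq_of_mem (Ioi_mem_nhds hz) heq
      have hJ0' := hasDerivAt_J0 hα hz
      have hJ1' := hasDerivAt_J1 hα hz
      have hder : HasDerivAt h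
          ((A.derivative.eval z * besselJ (α + 1) z +
              A.eval z * (besselJ α z - (α + 1) / z * besselJ (α + 1) z) +
            (B.derivative.eval z * besselJ α z +
              B.eval z * (α / z * besselJ α z - besselJ (α + 1) z))) * z ^ (-(m : ℤ)) +
           (A.eval z * besselJ (α + 1) z + B.eval z * besselJ α z) *
             ((Int.cast (-(m : ℤ)) : ℝ) * z ^ (-(m : ℤ) - 1))) z := by
        exact (((A.hasDerivAt z).mul hJ1').add ((B.hasDerivAt z).mul hJ0')).mul
          (hasDerivAt_zpow (-(m : ℤ)) z (Or.inl hz'))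
      have hkey : iteratedDeriv (m + 1) (besselJ α) z =
          (A.derivative.eval z * besselJ (α + 1) z +
              A.eval z * (besselJ α z - (α + 1) / z * besselJ (α + 1) z) +
            (B.derivative.eval z * besselJ α z +
              B.eval z * (α / z * besselJ α z - besselJ (α + 1) z))) * z ^ (-(m : ℤ)) +
           (A.eval z * besselJ (α + 1) z + B.eval z * besselJ α z) *
             ((Int.cast (-(m : ℤ)) : ℝ) * z ^ (-(m : ℤ) - 1)) := by
        rw [iteratedDeriv_succ, hev.deriv_eq, hder.deriv]
      rw [hkey]
      have e1 : (z:ℝ) ^ (-(m : ℤ)) = (z ^ m)⁻¹ := by rw [zpow_neg, zpow_natCast]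
      have e2 : (z:ℝ) ^ (-(m : ℤ) - 1) = (z ^ (m + 1))⁻¹ := by
        rw [show -(m:ℤ) - 1 = -((m + 1 : ℕ) : ℤ) by push_cast; ring, zpow_neg, zpow_natCast]
      rw [e1, e2]
      simp only [Polynomial.eval_sub, Polynomial.eval_add, Polynomial.eval_mul,
        Polynomial.eval_C, Polynomial.eval_X]
      have hzm : (z:ℝ) ^ m ≠ 0 := pow_ne_zero m hz'
      have hzm1 : (z:ℝ) ^ (m + 1) ≠ 0 := pow_ne_zero (m + 1) hz'
      field_simp
      push_cast
      ring

end BesselAux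

theorem stmt_10 (α : ℝ) (hα : -1 < α) (j : ℕ) (hj : 1 ≤ j) :
    ∃ P Q : Polynomial ℝ,
      (∀ k : ℕ, P.coeff k ≠ 0 → Odd k ∧ k ≤ 2 * j - 1) ∧
      (∀ k : ℕ, Q.coeff k ≠ 0 → Even k ∧ k ≤ 2 * j - 2) ∧
      ∀ z : ℝ, 0 < z →
        z ^ (2 * j) * iteratedDeriv (2 * j) (besselJ α) z =
          P.eval z * besselJ (α + 1) z +
            ((-1 : ℝ) ^ j * z ^ (2 * j) + Q.eval z) * besselJ α z := by
  obtain ⟨A, B, hA, hB, hBtop, -, hId⟩ := BesselAux.main_induction hα (2 * j)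
  refine ⟨A, B - Polynomial.C ((-1 : ℝ) ^ j) * Polynomial.X ^ (2 * j), ?_, ?_, ?_⟩
  · intro k hk
    obtain ⟨hodd, hle⟩ := hA k hk
    refine ⟨hodd, ?_⟩
    rcases Nat.lt_or_ge k (2 * j) with h | h
    · omega
    · exfalso
      have : k = 2 * j := le_antisymm hle h
      subst this
      exact (Nat.not_odd_iff_even.mpr ⟨j, by ring⟩) hodd
  · intro k hk
    have hcoeff : (B - Polynomial.C ((-1 : ℝ) ^ j) * Polynomial.X ^ (2 * j)).coeff k =
        B.coeff k - if k = 2 * j then (-1 : ℝ) ^ j else 0 := by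
      rw [Polynomial.coeff_sub, Polynomial.coeff_C_mul, Polynomial.coeff_X_pow, mul_ite,
        mul_one, mul_zero]
    rcases eq_or_ne k (2 * j) with h | h
    · subst h
      rw [hcoeff] at hk
      simp only [if_pos rfl] at hk
      rw [hBtop ⟨j, by ring⟩] at hk
      have : ((2 * j) / 2) = j := by omega
      rw [this] at hk
      simp at hk
    · rw [hcoeff, if_neg h, sub_zero] at hk
      obtain ⟨heven, hle⟩ := hB k hk
      refine ⟨heven, ?_⟩
      have hj2 : k ≠ 2 * j - 1 := by
        intro hh
        apply Nat.not_odd_iff_even.mpr heven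
        subst hh
        refine ⟨j - 1, by omega⟩
      omega
  · intro z hz
    have := hId z hz
    rw [this]
    simp only [Polynomial.eval_sub, Polynomial.eval_mul, Polynomial.eval_C,
      Polynomial.eval_pow, Polynomial.eval_X]
    ring
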